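/- Let p ≥ 1 and n ≥ 1 be integers and m a real with -n/2 < m < p/2+1. Let H: (0,∞) → [0,∞) and Π: (0,∞) → [0,∞) be measurable with ∫_0^∞ H(η)/η dη < ∞ and ∫_0^∞ Π(g)/(g+1)^{m-1} dg < ∞. Then ∫_{ℝ^p}∫_0^∞∫_0^∞∫_0^∞ [‖x‖² s^{n/2-1} / (‖x‖²/s)^m] · F(g,η;‖x‖²/s,s) · H(η) Π(g) dg dη ds dx = q₃(m) · (∫_0^∞ H(η)/η dη) · (∫_0^∞ Π(g)/(g+1)^{m-1} dg), where q₃(m) = 2^{p/2+n/2+1} π^{p/2} Γ(p/2+1-m)Γ(n/2+m)/Γ(p/2). -/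

import Mathlib

open MeasureTheory Real Set

/-- The kernel `F(g,η;w,s)`. -/
noncomputable def Fker (p n : ℕ) (g η w s : ℝ) : ℝ :=
  η ^ ((p : ℝ) / 2 + (n : ℝ) / 2) * (g + 1) ^ (-(p : ℝ) / 2) *
    Real.exp (-(η * s / 2) * (w / (g + 1) + 1))

/-- The constant `q₃(m)`. -/
noncomputable def q3 (p n : ℕ) (m : ℝ) : ℝ :=
  2 ^ ((p : ℝ) / 2 + (n : ℝ) / 2 + 1) * π ^ ((p : ℝ) / 2) *
    (Real.Gamma ((p : ℝ) / 2 + 1 - m) * Real.Gamma ((n : ℝ) / 2 + m)) /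
    Real.Gamma ((p : ℝ) / 2)

section Aux
open Function Metric Measure
open scoped ENNReal

lemma my_lintegral_fun_norm_addHaar {E : Type*} [NormedAddCommGroup E] [NormedSpace ℝ E]
    [MeasurableSpace E] [BorelSpace E] [FiniteDimensional ℝ E] [Nontrivial E]
    (μ : Measure E) [μ.IsAddHaarMeasure] (f : ℝ → ℝ≥0∞) (hf : Measurable f) :
    ∫⁻ x, f ‖x‖ ∂μ = (Module.finrank ℝ E) * μ (ball 0 1) *
      ∫⁻ y in Ioi (0 : ℝ), ENNReal.ofReal (y ^ (Module.finrank ℝ E - 1)) * f y := by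
  have hm : Measurable fun z : sphere (0 : E) 1 × Ioi (0 : ℝ) => f z.2 :=
    (hf.comp measurable_subtype_coe).comp measurable_snd
  have hd : ∫⁻ r : Ioi (0 : ℝ), f r ∂(Measure.volumeIoiPow (Module.finrank ℝ E - 1)) =
      ∫⁻ y in Ioi (0 : ℝ), ENNReal.ofReal (y ^ (Module.finrank ℝ E - 1)) * f y := by
    rw [Measure.volumeIoiPow]
    rw [show (fun r : Ioi (0:ℝ) => f r.1) = (f ∘ Subtype.val) from rfl,
      lintegral_withDensity_eq_lintegral_mul _
      ((measurable_subtype_coe.pow_const _).ennreal_ofReal) (hf.comp measurable_subtype_coe)]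
    exact lintegral_subtype_comap measurableSet_Ioi
      fun y => ENNReal.ofReal (y ^ (Module.finrank ℝ E - 1)) * f y
  calc ∫⁻ x, f ‖x‖ ∂μ = ∫⁻ x in ({0}ᶜ : Set E), f ‖x‖ ∂μ := by
        rw [restrict_compl_singleton]
    _ = ∫⁻ x : ({0}ᶜ : Set E), f ‖x.1‖ ∂(μ.comap (↑)) :=
        (lintegral_subtype_comap (measurableSet_singleton _).compl fun x => f ‖x‖).symm
    _ = ∫⁻ z : sphere (0 : E) 1 × Ioi (0 : ℝ), f z.2
          ∂(μ.toSphere.prod (.volumeIoiPow (Module.finrank ℝ E - 1))) :=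
        by rw [← μ.measurePreserving_homeomorphUnitSphereProd.lintegral_comp hm]; simp only [homeomorphUnitSphereProd_apply_snd_coe]
    _ = μ.toSphere univ * ∫⁻ r : Ioi (0 : ℝ), f r
          ∂(Measure.volumeIoiPow (Module.finrank ℝ E - 1)) := by
        rw [lintegral_prod _ hm.aemeasurable]
        simp [lintegral_const, mul_comm]
    _ = _ := by rw [toSphere_apply_univ, hd]

lemma gauss_moment (p : ℕ) (hp : 1 ≤ p) (m c : ℝ) (hm : m < (p : ℝ) / 2 + 1) (hc : 0 < c) :
    ∫⁻ x : EuclideanSpace ℝ (Fin p), ENNReal.ofReal (‖x‖ ^ (2 - 2*m) * Real.exp (-c * ‖x‖ ^ 2))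
      = ENNReal.ofReal (π ^ ((p : ℝ)/2) * Real.Gamma ((p : ℝ)/2 + 1 - m) /
          Real.Gamma ((p : ℝ)/2) * c ^ (m - (p : ℝ)/2 - 1)) := by
  haveI : Nonempty (Fin p) := ⟨⟨0, hp⟩⟩
  have hq : (-1 : ℝ) < (p : ℝ) + 1 - 2*m := by
    have : (1:ℝ) ≤ (p:ℕ) := by exact_mod_cast hp
    nlinarith
  have hdim : Module.finrank ℝ (EuclideanSpace ℝ (Fin p)) = p := by
    simp [finrank_euclideanSpace]
  have hmeas : Measurable fun r : ℝ =>
      ENNReal.ofReal (r ^ (2 - 2*m) * Real.exp (-c * r ^ 2)) := by fun_prop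
  rw [my_lintegral_fun_norm_addHaar volume
    (fun r => ENNReal.ofReal (r ^ (2 - 2*m) * Real.exp (-c * r ^ 2))) hmeas]
  have hinner : ∫⁻ y in Ioi (0:ℝ),
        ENNReal.ofReal (y ^ (Module.finrank ℝ (EuclideanSpace ℝ (Fin p)) - 1)) *
        ENNReal.ofReal (y ^ (2 - 2*m) * Real.exp (-c * y ^ 2))
      = ENNReal.ofReal (c ^ (-((p:ℝ) + 1 - 2*m + 1)/2) * (1/2) *
          Real.Gamma (((p:ℝ) + 1 - 2*m + 1)/2)) := by
    have h1 : ∀ y ∈ Ioi (0:ℝ),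
        ENNReal.ofReal (y ^ (Module.finrank ℝ (EuclideanSpace ℝ (Fin p)) - 1)) *
        ENNReal.ofReal (y ^ (2 - 2*m) * Real.exp (-c * y ^ 2))
        = ENNReal.ofReal (y ^ ((p:ℝ) + 1 - 2*m) * Real.exp (-c * y ^ 2)) := by
      intro y hy
      rw [← ENNReal.ofReal_mul (pow_nonneg hy.out.le _), ← mul_assoc]
      congr 2
      rw [hdim, ← Real.rpow_natCast y (p-1), ← Real.rpow_add hy]
      congr 1
      rw [Nat.cast_sub hp]
      push_cast; ring
    rw [setLIntegral_congr_fun measurableSet_Ioi h1,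
      ← ofReal_integral_eq_lintegral_ofReal]
    · congr 1
      have h2 : ∀ y ∈ Ioi (0:ℝ), y ^ ((p:ℝ) + 1 - 2*m) * Real.exp (-c * y ^ 2)
          = y ^ ((p:ℝ) + 1 - 2*m) * Real.exp (-c * y ^ (2:ℝ)) := by
        intro y hy; rw [Real.rpow_two]
      rw [setIntegral_congr_fun measurableSet_Ioi h2,
        integral_rpow_mul_exp_neg_mul_rpow two_pos hq hc]
    · exact integrableOn_rpow_mul_exp_neg_mul_sq hc hq
    · filter_upwards [ae_restrict_mem measurableSet_Ioi] with y hy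
      have hy' : (0:ℝ) < y := hy
      positivity
  rw [hinner, hdim, EuclideanSpace.volume_ball]
  simp only [Fintype.card_fin, ENNReal.ofReal_one, one_pow, one_mul]
  rw [show ((p:ℝ≥0∞)) = ENNReal.ofReal (p:ℝ) by simp,
    ← ENNReal.ofReal_mul (by positivity), ← ENNReal.ofReal_mul (by positivity)]
  congr 1
  have hπ : (Real.sqrt π) ^ p = π ^ ((p:ℝ)/2) := by
    rw [Real.sqrt_eq_rpow, ← Real.rpow_natCast (π ^ ((1:ℝ)/2)) p, ← Real.rpow_mul pi_pos.le]
    congr 1; ring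
  have hΓ : Real.Gamma ((p:ℝ)/2 + 1) = ((p:ℝ)/2) * Real.Gamma ((p:ℝ)/2) := by
    rw [Real.Gamma_add_one (by positivity)]
  have hce : c ^ (-((p:ℝ) + 1 - 2*m + 1)/2) = c ^ (m - (p:ℝ)/2 - 1) := by
    congr 1; ring
  have hΓ2 : ((p:ℝ) + 1 - 2*m + 1)/2 = (p:ℝ)/2 + 1 - m := by ring
  have hΓpos : (0:ℝ) < Real.Gamma ((p:ℝ)/2) := Real.Gamma_pos_of_pos (by positivity)
  have hppos : (0:ℝ) < (p:ℝ) := by positivity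
  rw [hπ, hΓ, hce, hΓ2]
  field_simp

lemma s_moment (b' η : ℝ) (hb : 0 < b') (hη : 0 < η) :
    ∫⁻ s in Ioi (0:ℝ), ENNReal.ofReal (s ^ (b' - 1) * Real.exp (-(η/2 * s)))
      = ENNReal.ofReal ((1/(η/2)) ^ b' * Real.Gamma b') := by
  rw [← ofReal_integral_eq_lintegral_ofReal, integral_rpow_mul_exp_neg_mul_Ioi hb (by positivity)]
  · have h := integrableOn_rpow_mul_exp_neg_mul_rpow (p := 1) (s := b' - 1) (b := η/2)
      (by linarith) one_pos (by positivity)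
    have heq : EqOn (fun s : ℝ => s ^ (b' - 1) * Real.exp (-(η/2) * s ^ (1:ℝ)))
        (fun s : ℝ => s ^ (b' - 1) * Real.exp (-(η/2 * s))) (Ioi 0) := by
      intro s hs
      simp only [Real.rpow_one, neg_mul]
    exact (h.congr_fun heq measurableSet_Ioi)
  · filter_upwards [ae_restrict_mem measurableSet_Ioi] with s hs
    have hs' : (0:ℝ) < s := hs
    positivity

lemma pw1 (p n : ℕ) (m : ℝ) (t s η g u v : ℝ) (ht : 0 < t) (hs : 0 < s) (hg : 0 < g) :
    (t ^ 2 * s ^ ((n : ℝ) / 2 - 1) / (t ^ 2 / s) ^ m) *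
        (η ^ ((p : ℝ) / 2 + (n : ℝ) / 2) * (g + 1) ^ (-(p : ℝ) / 2) *
          Real.exp (-(η * s / 2) * ((t ^ 2 / s) / (g + 1) + 1))) * u * v
      = (t ^ (2 - 2*m) * Real.exp (-(η/(2*(g+1))) * t ^ 2)) *
          (s ^ ((n : ℝ)/2 + m - 1) * Real.exp (-(η/2 * s))) *
          (η ^ ((p : ℝ)/2 + (n : ℝ)/2) * u) * ((g + 1) ^ (-((p : ℝ)/2)) * v) := by
    have hG : (0:ℝ) < g + 1 := by linarith
    rw [show (-(p:ℝ)/2) = -((p:ℝ)/2) from neg_div 2 (p:ℝ)]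
    have hcoeff : t ^ 2 * s ^ ((n : ℝ) / 2 - 1) / (t ^ 2 / s) ^ m
        = t ^ (2 - 2*m) * s ^ ((n : ℝ)/2 + m - 1) := by
      have h1 : (0:ℝ) < t ^ 2 * s ^ ((n : ℝ) / 2 - 1) / (t ^ 2 / s) ^ m := by positivity
      have h2 : (0:ℝ) < t ^ (2 - 2*m) * s ^ ((n : ℝ)/2 + m - 1) := by positivity
      rw [← Real.exp_log h1, ← Real.exp_log h2]
      congr 1
      rw [Real.log_div (by positivity) (by positivity),
        Real.log_mul (by positivity) (by positivity),
        Real.log_mul (by positivity) (by positivity)]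
      simp only [Real.log_rpow ht, Real.log_rpow hs,
        Real.log_rpow (show (0:ℝ) < t^2/s by positivity),
        Real.log_div (show (t:ℝ)^2 ≠ 0 by positivity) hs.ne', Real.log_pow]
      push_cast
      ring
    have hexp : Real.exp (-(η * s / 2) * ((t ^ 2 / s) / (g + 1) + 1))
        = Real.exp (-(η/(2*(g+1))) * t ^ 2) * Real.exp (-(η/2 * s)) := by
      rw [← Real.exp_add]
      congr 1
      field_simp
      ring
    rw [hexp, hcoeff]
    ring

lemma AR (a b m η g u v : ℝ) (hη : 0 < η) (hg : 0 < g) (ha : 0 < a) :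
    ((1/(η/2)) ^ (b+m) * Real.Gamma (b+m)) *
      (π ^ a * Real.Gamma (a + 1 - m) / Real.Gamma a * (η/(2*(g+1))) ^ (m - a - 1)) *
      ((η ^ (a+b) * u) * ((g+1) ^ (-a) * v))
    = (2 ^ (a+b+1) * π ^ a * (Real.Gamma (a+1-m) * Real.Gamma (b+m)) / Real.Gamma a) *
        (u / η) * (v / (g+1) ^ (m-1)) := by
  have hG : (0:ℝ) < g + 1 := by linarith
  have hΓa : (0:ℝ) < Real.Gamma a := Real.Gamma_pos_of_pos ha
  have hgm : ((g+1):ℝ) ^ (m-1) ≠ 0 := (Real.rpow_pos_of_pos hG _).ne'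
  have hcore : (1/(η/2)) ^ (b+m) * (η/(2*(g+1))) ^ (m - a - 1) * (η ^ (a+b) * (g+1) ^ (-a))
        * (η * (g+1) ^ (m-1)) = 2 ^ (a+b+1) := by
    rw [show (1:ℝ)/(η/2) = 2/η by ring]
    simp only [Real.rpow_def_of_pos (show (0:ℝ) < 2/η by positivity),
      Real.rpow_def_of_pos (show (0:ℝ) < η/(2*(g+1)) by positivity),
      Real.rpow_def_of_pos hη, Real.rpow_def_of_pos hG, Real.rpow_def_of_pos two_pos,
      Real.log_div two_ne_zero hη.ne',
      Real.log_div hη.ne' (show (2*(g+1):ℝ) ≠ 0 by positivity),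
      Real.log_mul two_ne_zero hG.ne']
    rw [← Real.exp_log hη]
    simp only [Real.log_exp, ← Real.exp_add]
    rw [Real.exp_eq_exp]
    ring
  have hcore_div : (1/(η/2)) ^ (b+m) * (η/(2*(g+1))) ^ (m - a - 1) * (η ^ (a+b) * (g+1) ^ (-a))
      = 2 ^ (a+b+1) / (η * (g+1) ^ (m-1)) := by
    rw [eq_div_iff (by positivity)]
    exact hcore
  calc ((1/(η/2)) ^ (b+m) * Real.Gamma (b+m)) *
      (π ^ a * Real.Gamma (a + 1 - m) / Real.Gamma a * (η/(2*(g+1))) ^ (m - a - 1)) *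
      ((η ^ (a+b) * u) * ((g+1) ^ (-a) * v))
      = (Real.Gamma (b+m) * (π ^ a * Real.Gamma (a+1-m) / Real.Gamma a) * u * v) *
        ((1/(η/2)) ^ (b+m) * (η/(2*(g+1))) ^ (m - a - 1) * (η ^ (a+b) * (g+1) ^ (-a))) := by
        ring
    _ = (Real.Gamma (b+m) * (π ^ a * Real.Gamma (a+1-m) / Real.Gamma a) * u * v) *
        (2 ^ (a+b+1) / (η * (g+1) ^ (m-1))) := by rw [hcore_div]
    _ = (2 ^ (a+b+1) * π ^ a * (Real.Gamma (a+1-m) * Real.Gamma (b+m)) / Real.Gamma a) *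
        (u / η) * (v / (g+1) ^ (m-1)) := by
        field_simp

/-- the clean integrand -/
noncomputable def phi (p n : ℕ) (m : ℝ) (H Pf : ℝ → ℝ)
    (x : EuclideanSpace ℝ (Fin p)) (s η g : ℝ) : ℝ :=
  (‖x‖ ^ (2 - 2*m) * Real.exp (-(η/(2*(g+1))) * ‖x‖ ^ 2)) *
    (s ^ ((n : ℝ)/2 + m - 1) * Real.exp (-(η/2 * s))) *
    (η ^ ((p : ℝ)/2 + (n : ℝ)/2) * H η) * ((g + 1) ^ (-((p : ℝ)/2)) * Pf g)

lemma phi_def (p n : ℕ) (m : ℝ) (H Pf : ℝ → ℝ)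
    (x : EuclideanSpace ℝ (Fin p)) (s η g : ℝ) :
    phi p n m H Pf x s η g =
      (‖x‖ ^ (2 - 2*m) * Real.exp (-(η/(2*(g+1))) * ‖x‖ ^ 2)) *
        (s ^ ((n : ℝ)/2 + m - 1) * Real.exp (-(η/2 * s))) *
        (η ^ ((p : ℝ)/2 + (n : ℝ)/2) * H η) * ((g + 1) ^ (-((p : ℝ)/2)) * Pf g) := rfl

attribute [irreducible] phi

end Aux
section Main
open Function
open scoped ENNReal

theorem clean_main (p n : ℕ) (hp : 1 ≤ p) (hn : 1 ≤ n) (m : ℝ)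
    (hm1 : -(n : ℝ) / 2 < m) (hm2 : m < (p : ℝ) / 2 + 1)
    (H Pf : ℝ → ℝ) (hHmeas : Measurable H) (hPmeas : Measurable Pf)
    (hHpos : ∀ η : ℝ, 0 < η → 0 ≤ H η) (hPpos : ∀ g : ℝ, 0 < g → 0 ≤ Pf g)
    (hHint : IntegrableOn (fun η : ℝ => H η / η) (Ioi 0))
    (hPint : IntegrableOn (fun g : ℝ => Pf g / (g + 1) ^ (m - 1)) (Ioi 0)) :
    (∫ x : EuclideanSpace ℝ (Fin p), ∫ s in Ioi (0 : ℝ), ∫ η in Ioi (0 : ℝ),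
        ∫ g in Ioi (0 : ℝ), phi p n m H Pf x s η g)
      = q3 p n m * (∫ η in Ioi (0 : ℝ), H η / η) *
          (∫ g in Ioi (0 : ℝ), Pf g / (g + 1) ^ (m - 1)) := by
  have hbm : (0:ℝ) < (n:ℝ)/2 + m := by
    have : (0:ℝ) < (n:ℝ)/2 := by positivity
    linarith
  have hΓp : (0:ℝ) < Real.Gamma ((p:ℝ)/2) := Real.Gamma_pos_of_pos (by positivity)
  have hΓ1 : (0:ℝ) < Real.Gamma ((p:ℝ)/2 + 1 - m) := Real.Gamma_pos_of_pos (by linarith)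
  have hΓ2 : (0:ℝ) < Real.Gamma ((n:ℝ)/2 + m) := Real.Gamma_pos_of_pos hbm
  have hq3 : (0:ℝ) < q3 p n m :=
    div_pos (mul_pos (mul_pos (Real.rpow_pos_of_pos two_pos _)
      (Real.rpow_pos_of_pos Real.pi_pos _)) (mul_pos hΓ1 hΓ2)) hΓp
  have hA0 : 0 ≤ ∫ η in Ioi (0:ℝ), H η / η :=
    setIntegral_nonneg measurableSet_Ioi fun η hη => div_nonneg (hHpos η hη) (le_of_lt hη)
  have hB0 : 0 ≤ ∫ g in Ioi (0:ℝ), Pf g / (g+1) ^ (m-1) :=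
    setIntegral_nonneg measurableSet_Ioi fun g hg =>
      div_nonneg (hPpos g hg) (Real.rpow_nonneg (by linarith [mem_Ioi.mp hg]) _)
  -- measurability
  have hφmR : Measurable (fun q : (EuclideanSpace ℝ (Fin p) × ℝ) × ℝ × ℝ =>
      phi p n m H Pf q.1.1 q.1.2 q.2.1 q.2.2) := by
    simp only [phi_def]
    have mx : Measurable fun q : (EuclideanSpace ℝ (Fin p) × ℝ) × ℝ × ℝ => ‖q.1.1‖ :=
      measurable_fst.fst.norm
    have ms : Measurable fun q : (EuclideanSpace ℝ (Fin p) × ℝ) × ℝ × ℝ => q.1.2 :=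
      measurable_fst.snd
    have mη : Measurable fun q : (EuclideanSpace ℝ (Fin p) × ℝ) × ℝ × ℝ => q.2.1 :=
      measurable_snd.fst
    have mg : Measurable fun q : (EuclideanSpace ℝ (Fin p) × ℝ) × ℝ × ℝ => q.2.2 :=
      measurable_snd.snd
    have hA : Measurable fun q : (EuclideanSpace ℝ (Fin p) × ℝ) × ℝ × ℝ =>
        ‖q.1.1‖ ^ (2 - 2*m) * Real.exp (-(q.2.1/(2*(q.2.2+1))) * ‖q.1.1‖ ^ 2) :=
      (mx.pow_const (2 - 2*m)).mul
        ((((mη.div ((mg.add_const 1).const_mul 2)).neg).mul (mx.pow_const 2)).exp)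
    have hB : Measurable fun q : (EuclideanSpace ℝ (Fin p) × ℝ) × ℝ × ℝ =>
        q.1.2 ^ ((n:ℝ)/2 + m - 1) * Real.exp (-(q.2.1/2 * q.1.2)) :=
      (ms.pow_const ((n:ℝ)/2 + m - 1)).mul (((mη.div_const 2).mul ms).neg.exp)
    have hC : Measurable fun q : (EuclideanSpace ℝ (Fin p) × ℝ) × ℝ × ℝ =>
        q.2.1 ^ ((p:ℝ)/2 + (n:ℝ)/2) * H q.2.1 :=
      (mη.pow_const ((p:ℝ)/2 + (n:ℝ)/2)).mul (hHmeas.comp mη)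
    have hD : Measurable fun q : (EuclideanSpace ℝ (Fin p) × ℝ) × ℝ × ℝ =>
        (q.2.2 + 1) ^ (-((p:ℝ)/2)) * Pf q.2.2 :=
      ((mg.add_const 1).pow_const (-((p:ℝ)/2))).mul (hPmeas.comp mg)
    exact ((hA.mul hB).mul hC).mul hD
  have hφm : Measurable (fun q : (EuclideanSpace ℝ (Fin p) × ℝ) × ℝ × ℝ =>
      ENNReal.ofReal (phi p n m H Pf q.1.1 q.1.2 q.2.1 q.2.2)) := hφmR.ennreal_ofReal
  have hsec : ∀ z : EuclideanSpace ℝ (Fin p) × ℝ,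
      Measurable (fun w : ℝ × ℝ => ENNReal.ofReal (phi p n m H Pf z.1 z.2 w.1 w.2)) :=
    fun z => hφm.comp measurable_prodMk_left
  have hsecg : ∀ (x : EuclideanSpace ℝ (Fin p)) (s η : ℝ),
      Measurable fun g : ℝ => phi p n m H Pf x s η g :=
    fun x s η => by
      have h : Measurable fun g : ℝ => ((x, s), (η, g)) :=
        measurable_const.prodMk (measurable_const.prodMk measurable_id)
      exact hφmR.comp h
  have hsecη : ∀ (x : EuclideanSpace ℝ (Fin p)) (s : ℝ),
      Measurable fun η : ℝ => ∫⁻ g in Ioi (0:ℝ), ENNReal.ofReal (phi p n m H Pf x s η g) :=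
    fun x s => Measurable.lintegral_prod_right' (hsec (x, s))
  have h1all : ∀ (x : EuclideanSpace ℝ (Fin p)) (s : ℝ),
      (∫⁻ η in Ioi (0:ℝ), ∫⁻ g in Ioi (0:ℝ), ENNReal.ofReal (phi p n m H Pf x s η g))
        = ∫⁻ w : ℝ × ℝ, ENNReal.ofReal (phi p n m H Pf x s w.1 w.2)
            ∂((volume.restrict (Ioi 0)).prod (volume.restrict (Ioi 0))) :=
    fun x s => (lintegral_prod _ (hsec (x, s)).aemeasurable).symm
  have hJm : Measurable (fun z : EuclideanSpace ℝ (Fin p) × ℝ =>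
      ∫⁻ η in Ioi (0:ℝ), ∫⁻ g in Ioi (0:ℝ), ENNReal.ofReal (phi p n m H Pf z.1 z.2 η g)) := by
    simp only [fun z : EuclideanSpace ℝ (Fin p) × ℝ => h1all z.1 z.2]
    exact Measurable.lintegral_prod_right' hφm
  have hJm2 : Measurable (fun x : EuclideanSpace ℝ (Fin p) =>
      ∫⁻ s in Ioi (0:ℝ), ∫⁻ η in Ioi (0:ℝ), ∫⁻ g in Ioi (0:ℝ),
        ENNReal.ofReal (phi p n m H Pf x s η g)) :=
    Measurable.lintegral_prod_right' hJm
  -- swap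
  have h2all : ∀ w : ℝ × ℝ,
      (∫⁻ x : EuclideanSpace ℝ (Fin p), ∫⁻ s in Ioi (0:ℝ),
          ENNReal.ofReal (phi p n m H Pf x s w.1 w.2))
        = ∫⁻ z : EuclideanSpace ℝ (Fin p) × ℝ, ENNReal.ofReal (phi p n m H Pf z.1 z.2 w.1 w.2)
            ∂((volume : Measure (EuclideanSpace ℝ (Fin p))).prod (volume.restrict (Ioi 0))) :=
    fun w => (lintegral_prod _ ((hφm.comp measurable_prodMk_right).aemeasurable)).symm
  have hswap : (∫⁻ x : EuclideanSpace ℝ (Fin p), ∫⁻ s in Ioi (0:ℝ), ∫⁻ η in Ioi (0:ℝ),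
        ∫⁻ g in Ioi (0:ℝ), ENNReal.ofReal (phi p n m H Pf x s η g))
      = ∫⁻ η in Ioi (0:ℝ), ∫⁻ g in Ioi (0:ℝ), ∫⁻ x : EuclideanSpace ℝ (Fin p),
          ∫⁻ s in Ioi (0:ℝ), ENNReal.ofReal (phi p n m H Pf x s η g) := by
    have hwm : Measurable fun w : ℝ × ℝ =>
        ∫⁻ z : EuclideanSpace ℝ (Fin p) × ℝ, ENNReal.ofReal (phi p n m H Pf z.1 z.2 w.1 w.2)
          ∂((volume : Measure (EuclideanSpace ℝ (Fin p))).prod (volume.restrict (Ioi 0))) :=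
      Measurable.lintegral_prod_left' hφm
    have hwm2 : Measurable fun w : ℝ × ℝ =>
        ∫⁻ x : EuclideanSpace ℝ (Fin p), ∫⁻ s in Ioi (0:ℝ),
          ENNReal.ofReal (phi p n m H Pf x s w.1 w.2) := by
      simp only [h2all]
      exact hwm
    calc (∫⁻ x : EuclideanSpace ℝ (Fin p), ∫⁻ s in Ioi (0:ℝ), ∫⁻ η in Ioi (0:ℝ),
        ∫⁻ g in Ioi (0:ℝ), ENNReal.ofReal (phi p n m H Pf x s η g))
        = ∫⁻ x : EuclideanSpace ℝ (Fin p), ∫⁻ s in Ioi (0:ℝ), ∫⁻ w : ℝ × ℝ,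
            ENNReal.ofReal (phi p n m H Pf x s w.1 w.2)
            ∂((volume.restrict (Ioi 0)).prod (volume.restrict (Ioi 0))) := by
          simp only [h1all]
      _ = ∫⁻ z : EuclideanSpace ℝ (Fin p) × ℝ, (∫⁻ w : ℝ × ℝ,
            ENNReal.ofReal (phi p n m H Pf z.1 z.2 w.1 w.2)
            ∂((volume.restrict (Ioi 0)).prod (volume.restrict (Ioi 0))))
            ∂((volume : Measure (EuclideanSpace ℝ (Fin p))).prod (volume.restrict (Ioi 0))) :=
          (lintegral_prod _ (Measurable.lintegral_prod_right' hφm).aemeasurable).symm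
      _ = ∫⁻ w : ℝ × ℝ, (∫⁻ z : EuclideanSpace ℝ (Fin p) × ℝ,
            ENNReal.ofReal (phi p n m H Pf z.1 z.2 w.1 w.2)
            ∂((volume : Measure (EuclideanSpace ℝ (Fin p))).prod (volume.restrict (Ioi 0))))
            ∂((volume.restrict (Ioi 0)).prod (volume.restrict (Ioi 0))) :=
          lintegral_lintegral_swap hφm.aemeasurable
      _ = ∫⁻ w : ℝ × ℝ, (∫⁻ x : EuclideanSpace ℝ (Fin p), ∫⁻ s in Ioi (0:ℝ),
            ENNReal.ofReal (phi p n m H Pf x s w.1 w.2))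
            ∂((volume.restrict (Ioi 0)).prod (volume.restrict (Ioi 0))) :=
          lintegral_congr fun w => (h2all w).symm
      _ = _ := lintegral_prod _ hwm2.aemeasurable
  -- key computed value of the inner double integral
  have hkey : ∀ η ∈ Ioi (0:ℝ), ∀ g ∈ Ioi (0:ℝ),
      (∫⁻ x : EuclideanSpace ℝ (Fin p), ∫⁻ s in Ioi (0:ℝ),
          ENNReal.ofReal (phi p n m H Pf x s η g))
        = ENNReal.ofReal (q3 p n m * (H η / η) * (Pf g / (g+1) ^ (m-1))) := by
    intro η hη g hg
    have hη' : (0:ℝ) < η := hη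
    have hg' : (0:ℝ) < g := hg
    have hG : (0:ℝ) < g + 1 := by linarith
    have hc : (0:ℝ) < η/(2*(g+1)) := by positivity
    have hHn : 0 ≤ H η := hHpos η hη'
    have hPn : 0 ≤ Pf g := hPpos g hg'
    have hXm : Measurable fun x : EuclideanSpace ℝ (Fin p) =>
        ENNReal.ofReal (‖x‖ ^ (2 - 2*m) * Real.exp (-(η/(2*(g+1))) * ‖x‖ ^ 2)) :=
      ((measurable_norm.pow_const (2 - 2*m)).mul
        (((measurable_norm.pow_const 2).const_mul (-(η/(2*(g+1))))).exp)).ennreal_ofReal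
    have hSm : Measurable fun s : ℝ =>
        ENNReal.ofReal (s ^ ((n:ℝ)/2 + m - 1) * Real.exp (-(η/2 * s))) :=
      ((measurable_id.pow_const ((n:ℝ)/2 + m - 1)).mul
        ((measurable_id.const_mul (η/2)).neg.exp)).ennreal_ofReal
    have hsint : ∀ x : EuclideanSpace ℝ (Fin p),
        (∫⁻ s in Ioi (0:ℝ), ENNReal.ofReal (phi p n m H Pf x s η g))
          = ENNReal.ofReal ((1/(η/2)) ^ ((n:ℝ)/2 + m) * Real.Gamma ((n:ℝ)/2 + m)) *
            (ENNReal.ofReal (‖x‖ ^ (2 - 2*m) * Real.exp (-(η/(2*(g+1))) * ‖x‖ ^ 2)) *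
             ENNReal.ofReal ((η ^ ((p:ℝ)/2 + (n:ℝ)/2) * H η) *
               ((g+1) ^ (-((p:ℝ)/2)) * Pf g))) := by
      intro x
      have h1 : ∀ s ∈ Ioi (0:ℝ), ENNReal.ofReal (phi p n m H Pf x s η g)
          = ENNReal.ofReal (s ^ ((n:ℝ)/2 + m - 1) * Real.exp (-(η/2 * s))) *
            (ENNReal.ofReal (‖x‖ ^ (2 - 2*m) * Real.exp (-(η/(2*(g+1))) * ‖x‖ ^ 2)) *
             ENNReal.ofReal ((η ^ ((p:ℝ)/2 + (n:ℝ)/2) * H η) *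
               ((g+1) ^ (-((p:ℝ)/2)) * Pf g))) := by
        intro s hs
        have hs' : (0:ℝ) < s := hs
        rw [← ENNReal.ofReal_mul (by positivity), ← ENNReal.ofReal_mul (by positivity)]
        congr 1
        rw [phi_def]; ring
      rw [setLIntegral_congr_fun measurableSet_Ioi h1,
        lintegral_mul_const'' _ hSm.aemeasurable, s_moment ((n:ℝ)/2 + m) η hbm hη']
    rw [lintegral_congr hsint, lintegral_const_mul'' _ (hXm.mul_const _).aemeasurable,
      lintegral_mul_const'' _ hXm.aemeasurable, gauss_moment p hp m (η/(2*(g+1))) hm2 hc]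
    have hXval : (0:ℝ) ≤ π ^ ((p:ℝ)/2) * Real.Gamma ((p:ℝ)/2 + 1 - m) / Real.Gamma ((p:ℝ)/2)
        * (η/(2*(g+1))) ^ (m - (p:ℝ)/2 - 1) :=
      mul_nonneg (div_nonneg (mul_nonneg (Real.rpow_nonneg Real.pi_pos.le _) hΓ1.le) hΓp.le)
        (Real.rpow_nonneg hc.le _)
    have hSval : (0:ℝ) ≤ (1/(η/2)) ^ ((n:ℝ)/2 + m) * Real.Gamma ((n:ℝ)/2 + m) :=
      mul_nonneg (Real.rpow_nonneg (by positivity) _) hΓ2.le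
    rw [← ENNReal.ofReal_mul hXval, ← ENNReal.ofReal_mul hSval]
    congr 1
    have har := AR ((p:ℝ)/2) ((n:ℝ)/2) m η g (H η) (Pf g) hη' hg' (by positivity)
    calc ((1/(η/2)) ^ ((n:ℝ)/2 + m) * Real.Gamma ((n:ℝ)/2 + m)) *
        ((π ^ ((p:ℝ)/2) * Real.Gamma ((p:ℝ)/2 + 1 - m) / Real.Gamma ((p:ℝ)/2) *
          (η/(2*(g+1))) ^ (m - (p:ℝ)/2 - 1)) *
         ((η ^ ((p:ℝ)/2 + (n:ℝ)/2) * H η) * ((g+1) ^ (-((p:ℝ)/2)) * Pf g)))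
        = ((1/(η/2)) ^ ((n:ℝ)/2 + m) * Real.Gamma ((n:ℝ)/2 + m)) *
          (π ^ ((p:ℝ)/2) * Real.Gamma ((p:ℝ)/2 + 1 - m) / Real.Gamma ((p:ℝ)/2) *
            (η/(2*(g+1))) ^ (m - (p:ℝ)/2 - 1)) *
          ((η ^ ((p:ℝ)/2 + (n:ℝ)/2) * H η) * ((g+1) ^ (-((p:ℝ)/2)) * Pf g)) := by ring
      _ = (2 ^ ((p:ℝ)/2 + (n:ℝ)/2 + 1) * π ^ ((p:ℝ)/2) *
            (Real.Gamma ((p:ℝ)/2 + 1 - m) * Real.Gamma ((n:ℝ)/2 + m)) / Real.Gamma ((p:ℝ)/2)) *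
          (H η / η) * (Pf g / (g+1) ^ (m-1)) := har
      _ = q3 p n m * (H η / η) * (Pf g / (g+1) ^ (m-1)) := rfl
  -- value of the swapped quadruple lintegral
  have hPm' : Measurable fun g : ℝ => ENNReal.ofReal (Pf g / (g+1) ^ (m-1)) :=
    (hPmeas.div ((measurable_id.add_const 1).pow_const (m-1))).ennreal_ofReal
  have hHm' : Measurable fun η : ℝ => ENNReal.ofReal (q3 p n m * (H η / η)) :=
    ((hHmeas.div measurable_id).const_mul (q3 p n m)).ennreal_ofReal
  have hBint : ∫⁻ g in Ioi (0:ℝ), ENNReal.ofReal (Pf g / (g+1) ^ (m-1))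
      = ENNReal.ofReal (∫ g in Ioi (0:ℝ), Pf g / (g+1) ^ (m-1)) := by
    rw [← ofReal_integral_eq_lintegral_ofReal hPint]
    filter_upwards [ae_restrict_mem measurableSet_Ioi] with g hg
    exact div_nonneg (hPpos g hg) (Real.rpow_nonneg (by linarith [mem_Ioi.mp hg]) _)
  have hT : (∫⁻ η in Ioi (0:ℝ), ∫⁻ g in Ioi (0:ℝ), ∫⁻ x : EuclideanSpace ℝ (Fin p),
        ∫⁻ s in Ioi (0:ℝ), ENNReal.ofReal (phi p n m H Pf x s η g))
      = ENNReal.ofReal (q3 p n m * ((∫ η in Ioi (0:ℝ), H η / η) *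
          (∫ g in Ioi (0:ℝ), Pf g / (g+1) ^ (m-1)))) := by
    have step1 : ∀ η ∈ Ioi (0:ℝ),
        (∫⁻ g in Ioi (0:ℝ), ∫⁻ x : EuclideanSpace ℝ (Fin p), ∫⁻ s in Ioi (0:ℝ),
            ENNReal.ofReal (phi p n m H Pf x s η g))
          = ENNReal.ofReal (q3 p n m * (H η / η)) *
            ENNReal.ofReal (∫ g in Ioi (0:ℝ), Pf g / (g+1) ^ (m-1)) := by
      intro η hη
      have h1 : ∀ g ∈ Ioi (0:ℝ), (∫⁻ x : EuclideanSpace ℝ (Fin p), ∫⁻ s in Ioi (0:ℝ),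
            ENNReal.ofReal (phi p n m H Pf x s η g))
          = ENNReal.ofReal (q3 p n m * (H η / η)) * ENNReal.ofReal (Pf g / (g+1) ^ (m-1)) := by
        intro g hg
        rw [hkey η hη g hg,
          ENNReal.ofReal_mul (mul_nonneg hq3.le (div_nonneg (hHpos η hη) (le_of_lt hη)))]
      rw [setLIntegral_congr_fun measurableSet_Ioi h1,
        lintegral_const_mul'' _ hPm'.aemeasurable, hBint]
    rw [setLIntegral_congr_fun measurableSet_Ioi step1,
      lintegral_mul_const'' _ hHm'.aemeasurable,
      ← ofReal_integral_eq_lintegral_ofReal (hHint.const_mul (q3 p n m))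
        (by filter_upwards [ae_restrict_mem measurableSet_Ioi] with η hη;
            exact mul_nonneg hq3.le (div_nonneg (hHpos η hη) (le_of_lt hη))),
      integral_const_mul, ← ENNReal.ofReal_mul (mul_nonneg hq3.le hA0)]
    congr 1
    ring
  have hvalue : (∫⁻ x : EuclideanSpace ℝ (Fin p), ∫⁻ s in Ioi (0:ℝ), ∫⁻ η in Ioi (0:ℝ),
        ∫⁻ g in Ioi (0:ℝ), ENNReal.ofReal (phi p n m H Pf x s η g))
      = ENNReal.ofReal (q3 p n m * ((∫ η in Ioi (0:ℝ), H η / η) *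
          (∫ g in Ioi (0:ℝ), Pf g / (g+1) ^ (m-1)))) := hswap.trans hT
  have hfin : (∫⁻ x : EuclideanSpace ℝ (Fin p), ∫⁻ s in Ioi (0:ℝ), ∫⁻ η in Ioi (0:ℝ),
        ∫⁻ g in Ioi (0:ℝ), ENNReal.ofReal (phi p n m H Pf x s η g)) ≠ ⊤ := by
    rw [hvalue]; exact ENNReal.ofReal_ne_top
  -- conversion from Bochner to lintegral, innermost out
  have hC3 : ∀ (x : EuclideanSpace ℝ (Fin p)) (s : ℝ), 0 < s →
      (∫⁻ η in Ioi (0:ℝ), ∫⁻ g in Ioi (0:ℝ), ENNReal.ofReal (phi p n m H Pf x s η g)) ≠ ⊤ →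
      (∫ η in Ioi (0:ℝ), ∫ g in Ioi (0:ℝ), phi p n m H Pf x s η g)
        = (∫⁻ η in Ioi (0:ℝ), ∫⁻ g in Ioi (0:ℝ),
            ENNReal.ofReal (phi p n m H Pf x s η g)).toReal := by
    intro x s hs hfin3
    have hgconv : ∀ η ∈ Ioi (0:ℝ), (∫ g in Ioi (0:ℝ), phi p n m H Pf x s η g)
        = (∫⁻ g in Ioi (0:ℝ), ENNReal.ofReal (phi p n m H Pf x s η g)).toReal := by
      intro η hη
      have hpos : 0 ≤ᵐ[volume.restrict (Ioi (0:ℝ))] fun g => phi p n m H Pf x s η g := by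
        filter_upwards [ae_restrict_mem measurableSet_Ioi] with g hg
        have hg' : (0:ℝ) < g := hg
        have hη' : (0:ℝ) < η := hη
        rw [phi_def]
        have h1 : 0 ≤ H η := hHpos η hη'
        have h2 : 0 ≤ Pf g := hPpos g hg'
        have e1 : (0:ℝ) ≤ ‖x‖ ^ (2 - 2*m) * Real.exp (-(η/(2*(g+1))) * ‖x‖ ^ 2) := by positivity
        have e2 : (0:ℝ) ≤ s ^ ((n:ℝ)/2 + m - 1) * Real.exp (-(η/2 * s)) := by positivity
        have e3 : (0:ℝ) ≤ η ^ ((p:ℝ)/2 + (n:ℝ)/2) * H η :=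
          mul_nonneg (Real.rpow_nonneg hη'.le _) h1
        have e4 : (0:ℝ) ≤ (g+1) ^ (-((p:ℝ)/2)) * Pf g :=
          mul_nonneg (Real.rpow_nonneg (by linarith) _) h2
        exact mul_nonneg (mul_nonneg (mul_nonneg e1 e2) e3) e4
      rw [integral_eq_lintegral_of_nonneg_ae hpos (hsecg x s η).aestronglyMeasurable]
    rw [setIntegral_congr_fun measurableSet_Ioi hgconv,
      integral_eq_lintegral_of_nonneg_ae
        (Filter.Eventually.of_forall fun η => ENNReal.toReal_nonneg)
        ((hsecη x s).ennreal_toReal.aestronglyMeasurable)]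
    congr 1
    refine lintegral_congr_ae ?_
    filter_upwards [MeasureTheory.ae_lt_top (hsecη x s) hfin3] with η hlt
    exact ENNReal.ofReal_toReal hlt.ne
  have hsm : ∀ x : EuclideanSpace ℝ (Fin p), Measurable fun s : ℝ =>
      ∫⁻ η in Ioi (0:ℝ), ∫⁻ g in Ioi (0:ℝ), ENNReal.ofReal (phi p n m H Pf x s η g) :=
    fun x => hJm.comp measurable_prodMk_left
  have hC2 : ∀ x : EuclideanSpace ℝ (Fin p),
      (∫⁻ s in Ioi (0:ℝ), ∫⁻ η in Ioi (0:ℝ), ∫⁻ g in Ioi (0:ℝ),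
          ENNReal.ofReal (phi p n m H Pf x s η g)) ≠ ⊤ →
      (∫ s in Ioi (0:ℝ), ∫ η in Ioi (0:ℝ), ∫ g in Ioi (0:ℝ), phi p n m H Pf x s η g)
        = (∫⁻ s in Ioi (0:ℝ), ∫⁻ η in Ioi (0:ℝ), ∫⁻ g in Ioi (0:ℝ),
            ENNReal.ofReal (phi p n m H Pf x s η g)).toReal := by
    intro x hfin2
    have hae : (fun s : ℝ => ∫ η in Ioi (0:ℝ), ∫ g in Ioi (0:ℝ), phi p n m H Pf x s η g)
        =ᵐ[volume.restrict (Ioi (0:ℝ))] fun s =>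
          (∫⁻ η in Ioi (0:ℝ), ∫⁻ g in Ioi (0:ℝ),
            ENNReal.ofReal (phi p n m H Pf x s η g)).toReal := by
      filter_upwards [ae_restrict_mem measurableSet_Ioi,
        MeasureTheory.ae_lt_top (hsm x) hfin2] with s hs hlt
      exact hC3 x s hs hlt.ne
    rw [integral_congr_ae hae,
      integral_eq_lintegral_of_nonneg_ae
        (Filter.Eventually.of_forall fun s => ENNReal.toReal_nonneg)
        ((hsm x).ennreal_toReal.aestronglyMeasurable)]
    congr 1
    refine lintegral_congr_ae ?_
    filter_upwards [MeasureTheory.ae_lt_top (hsm x) hfin2] with s hlt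
    exact ENNReal.ofReal_toReal hlt.ne
  have hae1 : (fun x : EuclideanSpace ℝ (Fin p) =>
      ∫ s in Ioi (0:ℝ), ∫ η in Ioi (0:ℝ), ∫ g in Ioi (0:ℝ), phi p n m H Pf x s η g)
      =ᵐ[volume] fun x => (∫⁻ s in Ioi (0:ℝ), ∫⁻ η in Ioi (0:ℝ), ∫⁻ g in Ioi (0:ℝ),
          ENNReal.ofReal (phi p n m H Pf x s η g)).toReal := by
    filter_upwards [MeasureTheory.ae_lt_top hJm2 hfin] with x hlt
    exact hC2 x hlt.ne
  rw [integral_congr_ae hae1,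
    integral_eq_lintegral_of_nonneg_ae
      (Filter.Eventually.of_forall fun x => ENNReal.toReal_nonneg)
      (hJm2.ennreal_toReal.aestronglyMeasurable)]
  have hlast : (∫⁻ x : EuclideanSpace ℝ (Fin p), ENNReal.ofReal
      ((∫⁻ s in Ioi (0:ℝ), ∫⁻ η in Ioi (0:ℝ), ∫⁻ g in Ioi (0:ℝ),
        ENNReal.ofReal (phi p n m H Pf x s η g)).toReal))
      = ∫⁻ x : EuclideanSpace ℝ (Fin p), ∫⁻ s in Ioi (0:ℝ), ∫⁻ η in Ioi (0:ℝ),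
          ∫⁻ g in Ioi (0:ℝ), ENNReal.ofReal (phi p n m H Pf x s η g) := by
    refine lintegral_congr_ae ?_
    filter_upwards [MeasureTheory.ae_lt_top hJm2 hfin] with x hlt
    exact ENNReal.ofReal_toReal hlt.ne
  rw [hlast, hvalue,
    ENNReal.toReal_ofReal (mul_nonneg hq3.le (mul_nonneg hA0 hB0)), ← mul_assoc]

end Main


/-- Main integral identity (Lemma B.1 of the paper). -/
theorem main_integral_identity (p n : ℕ) (hp : 1 ≤ p) (hn : 1 ≤ n) (m : ℝ)
    (hm1 : -(n : ℝ) / 2 < m) (hm2 : m < (p : ℝ) / 2 + 1)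
    (H Pf : ℝ → ℝ) (hHmeas : Measurable H) (hPmeas : Measurable Pf)
    (hHpos : ∀ η : ℝ, 0 < η → 0 ≤ H η) (hPpos : ∀ g : ℝ, 0 < g → 0 ≤ Pf g)
    (hHint : IntegrableOn (fun η : ℝ => H η / η) (Ioi 0))
    (hPint : IntegrableOn (fun g : ℝ => Pf g / (g + 1) ^ (m - 1)) (Ioi 0)) :
    (∫ x : EuclideanSpace ℝ (Fin p), ∫ s in Ioi (0 : ℝ), ∫ η in Ioi (0 : ℝ),
        ∫ g in Ioi (0 : ℝ),
          (‖x‖ ^ 2 * s ^ ((n : ℝ) / 2 - 1) / (‖x‖ ^ 2 / s) ^ m) *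
            Fker p n g η (‖x‖ ^ 2 / s) s * H η * Pf g)
      = q3 p n m * (∫ η in Ioi (0 : ℝ), H η / η) *
          (∫ g in Ioi (0 : ℝ), Pf g / (g + 1) ^ (m - 1)) := by
  haveI : Nonempty (Fin p) := ⟨⟨0, hp⟩⟩
  have hae0 : ∀ᵐ x : EuclideanSpace ℝ (Fin p) ∂volume, x ≠ 0 := by
    have h0 : (volume : Measure (EuclideanSpace ℝ (Fin p))) {0} = 0 := measure_singleton 0
    filter_upwards [MeasureTheory.compl_mem_ae_iff.2 h0] with x hx
    simpa using hx
  have htrans : (fun x : EuclideanSpace ℝ (Fin p) => ∫ s in Ioi (0:ℝ), ∫ η in Ioi (0:ℝ),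
      ∫ g in Ioi (0:ℝ), (‖x‖ ^ 2 * s ^ ((n : ℝ) / 2 - 1) / (‖x‖ ^ 2 / s) ^ m) *
        Fker p n g η (‖x‖ ^ 2 / s) s * H η * Pf g)
      =ᵐ[volume] (fun x => ∫ s in Ioi (0:ℝ), ∫ η in Ioi (0:ℝ), ∫ g in Ioi (0:ℝ),
        phi p n m H Pf x s η g) := by
    filter_upwards [hae0] with x hx
    refine setIntegral_congr_fun measurableSet_Ioi fun s hs => ?_
    refine setIntegral_congr_fun measurableSet_Ioi fun η hη => ?_
    refine setIntegral_congr_fun measurableSet_Ioi fun g hg => ?_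
    rw [phi_def]
    have ht : 0 < ‖x‖ := norm_pos_iff.mpr hx
    simpa only [Fker] using pw1 p n m ‖x‖ s η g (H η) (Pf g) ht hs hg
  rw [integral_congr_ae htrans]
  exact clean_main p n hp hn m hm1 hm2 H Pf hHmeas hPmeas hHpos hPpos hHint hPint
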